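/- Mutual information bound for simulating PR-correlations with a RAC: in the racbox-simulation setting, suppose perfect PR-correlations hold, i.e. a ⊕ b = x ∧ y at every point of positive probability. Then the mutual information (in bits) between Alice's message bit z and everything on Bob's side satisfies I(z : (b̃, ỹ, y, s)) ≤ 1/2. -/

import Mathlib

open scoped Classical

/-- A probability mass function on a finite type. -/
def IsPMF {Ω : Type*} [Fintype Ω] (P : Ω → ℝ) : Prop :=
  (∀ ω, 0 ≤ P ω) ∧ ∑ ω, P ω = 1

/-- Probability of an event under a pmf. -/
noncomputable def Pr {Ω : Type*} [Fintype Ω] (P : Ω → ℝ) (E : Ω → Prop) : ℝ :=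
  ∑ ω, if E ω then P ω else 0

/-- Shannon entropy (in bits) of a random variable `X` under pmf `P`,
with the convention `0 · log₂ 0 = 0`. -/
noncomputable def ent {Ω α : Type*} [Fintype Ω] [Fintype α]
    (P : Ω → ℝ) (X : Ω → α) : ℝ :=
  -∑ v : α, Pr P (fun ω => X ω = v) * Real.logb 2 (Pr P (fun ω => X ω = v))

/-- Conditional entropy `H(X|Y) = H(X,Y) - H(Y)`. -/
noncomputable def condEnt {Ω α β : Type*} [Fintype Ω] [Fintype α] [Fintype β]
    (P : Ω → ℝ) (X : Ω → α) (Y : Ω → β) : ℝ :=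
  ent P (fun ω => (X ω, Y ω)) - ent P Y

/-- Mutual information `I(X:Y) = H(X) + H(Y) - H(X,Y)`. -/
noncomputable def mutInf {Ω α β : Type*} [Fintype Ω] [Fintype α] [Fintype β]
    (P : Ω → ℝ) (X : Ω → α) (Y : Ω → β) : ℝ :=
  ent P X + ent P Y - ent P (fun ω => (X ω, Y ω))

/-- Conditional mutual information
`I(X:Y|Z) = H(X,Z) + H(Y,Z) - H(X,Y,Z) - H(Z)`. -/
noncomputable def condMutInf {Ω α β γ : Type*} [Fintype Ω] [Fintype α] [Fintype β] [Fintype γ]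
    (P : Ω → ℝ) (X : Ω → α) (Y : Ω → β) (Z : Ω → γ) : ℝ :=
  ent P (fun ω => (X ω, Z ω)) + ent P (fun ω => (Y ω, Z ω))
    - ent P (fun ω => (X ω, Y ω, Z ω)) - ent P Z

/-! Auxiliary lemmas -/

section PrLemmas
variable {Ω : Type*} [Fintype Ω]

lemma Pr_nonneg (P : Ω → ℝ) (hP : ∀ ω, 0 ≤ P ω) (E : Ω → Prop) : 0 ≤ Pr P E :=
  Finset.sum_nonneg fun ω _ => by by_cases h : E ω <;> simp [h, hP ω]

lemma Pr_congr {P : Ω → ℝ} {E E' : Ω → Prop} (h : ∀ ω, E ω ↔ E' ω) : Pr P E = Pr P E' :=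
  Finset.sum_congr rfl fun ω _ => by rw [if_congr (h ω) rfl rfl]

lemma Pr_pos_exists {P : Ω → ℝ} (hP : ∀ ω, 0 ≤ P ω) {E : Ω → Prop} (h : 0 < Pr P E) :
    ∃ ω, 0 < P ω ∧ E ω := by
  by_contra hc
  push_neg at hc
  have : Pr P E = 0 := Finset.sum_eq_zero fun ω _ => by
    by_cases hE : E ω
    · simp only [hE, if_true]
      rcases lt_or_eq_of_le (hP ω) with h' | h'
      · exact absurd hE (hc ω h')
      · exact h'.symm
    · simp [hE]
  rw [this] at h; exact lt_irrefl 0 h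

lemma Pr_map {α : Type*} [Fintype α] (P : Ω → ℝ) (T : Ω → α) (p : α → Prop) :
    Pr P (fun ω => p (T ω)) = ∑ v, if p v then Pr P (fun ω => T ω = v) else 0 := by
  unfold Pr
  have step1 : ∀ ω, (if p (T ω) then P ω else 0)
      = ∑ v, if T ω = v then (if p v then P ω else 0) else 0 := by
    intro ω
    rw [Finset.sum_ite_eq Finset.univ (T ω) (fun v => if p v then P ω else 0)]
    simp
  rw [Finset.sum_congr rfl fun ω _ => step1 ω, Finset.sum_comm]
  refine Finset.sum_congr rfl fun v _ => ?_
  by_cases hp : p v <;> simp [hp]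

end PrLemmas

lemma lb_half' : Real.logb 2 ((1:ℝ)/2) = -1 := by
  rw [one_div, Real.logb_inv, Real.logb_self_eq_one (by norm_num)]

lemma lb_quarter' : Real.logb 2 ((1:ℝ)/4) = -2 := by
  have h : ((1:ℝ)/4) = ((1:ℝ)/2) * ((1:ℝ)/2) := by norm_num
  rw [h, Real.logb_mul (by norm_num) (by norm_num), lb_half']; norm_num

lemma lb_34' : Real.logb 2 ((3:ℝ)/4) = Real.logb 2 3 - 2 := by
  rw [Real.logb_div (by norm_num) (by norm_num)]
  have h : Real.logb 2 (4:ℝ) = 2 := by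
    have e : (4:ℝ) = 2 * 2 := by norm_num
    rw [e, Real.logb_mul (by norm_num) (by norm_num), Real.logb_self_eq_one (by norm_num)]
    norm_num
  rw [h]

lemma lb_L : (4:ℝ)/3 ≤ Real.logb 2 3 := by
  have h2 : (0:ℝ) < Real.log 2 := Real.log_pos (by norm_num)
  rw [Real.logb, le_div_iff₀ h2]
  have h : Real.log ((2:ℝ)^4) ≤ Real.log ((3:ℝ)^3) := by
    apply Real.log_le_log (by norm_num); norm_num
  rw [Real.log_pow, Real.log_pow] at h
  push_cast at h
  linarith

lemma split_term (a b : ℝ) :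
    (a * b) * Real.logb 2 (a * b) = (a * b) * Real.logb 2 a + (a * b) * Real.logb 2 b := by
  rcases eq_or_ne a 0 with ha | ha
  · simp [ha]
  rcases eq_or_ne b 0 with hb | hb
  · simp [hb]
  rw [Real.logb_mul ha hb]; ring

lemma ent_decomp {S β : Type*} [Fintype S] [Fintype β] (μ : S → ℝ) (c : S → β → ℝ)
    (hc1 : ∀ t, ∑ w, c t w = 1) :
    -∑ t, ∑ w, (μ t * c t w) * Real.logb 2 (μ t * c t w)
      = (-∑ t, μ t * Real.logb 2 (μ t))
        + ∑ t, μ t * (∑ w, -(c t w * Real.logb 2 (c t w))) := by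
  have key : ∀ t, ∑ w, (μ t * c t w) * Real.logb 2 (μ t * c t w)
      = μ t * Real.logb 2 (μ t) - μ t * (∑ w, -(c t w * Real.logb 2 (c t w))) := by
    intro t
    have e1 : ∀ w ∈ Finset.univ, (μ t * c t w) * Real.logb 2 (μ t * c t w)
        = (μ t * Real.logb 2 (μ t)) * c t w + μ t * (c t w * Real.logb 2 (c t w)) := by
      intro w _
      rw [split_term]; ring
    rw [Finset.sum_congr rfl e1, Finset.sum_add_distrib, ← Finset.mul_sum, ← Finset.mul_sum,
      hc1, mul_one]
    have e2 : ∑ w, -(c t w * Real.logb 2 (c t w)) = -∑ w, c t w * Real.logb 2 (c t w) :=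
      Finset.sum_neg_distrib _
    rw [e2]; ring
  rw [Finset.sum_congr rfl fun t _ => key t, Finset.sum_sub_distrib]
  ring

lemma h8 (n : ℝ) (hn : 0 ≤ n) :
    -(n/8 * Real.logb 2 (n/8)) = n/8 + (1/2) * -(n/4 * Real.logb 2 (n/4)) := by
  rcases eq_or_lt_of_le hn with h | h
  · simp [← h]
  · have h4 : n/4 ≠ 0 := ne_of_gt (by positivity)
    have e : n/8 = (n/4) * (1/2) := by ring
    rw [e, Real.logb_mul h4 (by norm_num), lb_half']
    ring

/-! Counting functions and the single-slice mutual information value -/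

def cnt1 (f : Bool → Bool → Bool) (vz vb : Bool) : ℕ :=
  (if f false vz = vb then 1 else 0) + (if f true vz = vb then 1 else 0)

def cnt2 (f : Bool → Bool → Bool) (vb : Bool) : ℕ :=
  cnt1 f false vb + cnt1 f true vb

noncomputable def SB (f : Bool → Bool → Bool) : ℝ :=
  ∑ vb : Bool, -(((cnt2 f vb : ℝ))/4 * Real.logb 2 (((cnt2 f vb : ℝ))/4))

noncomputable def SJ (f : Bool → Bool → Bool) : ℝ :=
  ∑ vz : Bool, ∑ vb : Bool,
    -(((cnt1 f vz vb : ℝ))/4 * Real.logb 2 (((cnt1 f vz vb : ℝ))/4))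

noncomputable def iVal (f : Bool → Bool → Bool) : ℝ := 1 + SB f - SJ f

lemma cnt1_sum (f : Bool → Bool → Bool) (vz : Bool) :
    cnt1 f vz false + cnt1 f vz true = 2 := by
  unfold cnt1
  rcases hf : f false vz <;> rcases hg : f true vz <;> simp

lemma cnt2_sum (f : Bool → Bool → Bool) : cnt2 f false + cnt2 f true = 4 := by
  unfold cnt2
  have h1 := cnt1_sum f false
  have h2 := cnt1_sum f true
  omega

set_option maxHeartbeats 2000000 in
lemma iVal_eq (f : Bool → Bool → Bool) :
    iVal f = if cnt1 f false true = cnt1 f true true then 0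
      else if cnt2 f true = 2 then 1 else 3/2 - 3/4 * Real.logb 2 3 := by
  rcases hff : f false false <;> rcases htf : f true false <;>
    rcases hft : f false true <;> rcases htt : f true true <;>
      simp only [iVal, SB, SJ, Fintype.sum_bool] <;>
      norm_num [cnt1, cnt2, hff, htf, hft, htt, lb_half', lb_quarter', lb_34'] <;> ring

lemma key_comb : ∀ (f0 f1 : Bool → Bool → Bool) (b0 b1 : Bool → Bool),
    (∀ vx vz, xor (b0 (f0 vx vz)) (b1 (f1 vx vz)) = vx) →
    (cnt1 f0 false true = cnt1 f0 true true) ∨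
    (cnt1 f1 false true = cnt1 f1 true true) ∨
    (cnt2 f0 true ≠ 2 ∧ cnt2 f1 true ≠ 2) := by decide

lemma iVal_le_one (f : Bool → Bool → Bool) : iVal f ≤ 1 := by
  have hL := lb_L
  rw [iVal_eq]; split_ifs <;> linarith

lemma iVal_le_half (f : Bool → Bool → Bool) (h : cnt2 f true ≠ 2) : iVal f ≤ 1/2 := by
  have hL := lb_L
  rw [iVal_eq]
  split_ifs <;> first | linarith | exact absurd ‹_› h

lemma iVal_zero (f : Bool → Bool → Bool) (h : cnt1 f false true = cnt1 f true true) :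
    iVal f = 0 := by
  rw [iVal_eq]; simp [h]

lemma slice_bound (f0 f1 : Bool → Bool → Bool) (g : Bool → Bool)
    (α : Bool → Bool → Bool) (β : Bool → Bool → Bool → Bool)
    (hcon : ∀ vx vy vz,
      β (g vy) (if g vy then f1 vx vz else f0 vx vz) vy = xor (α vx vz) (vx && vy)) :
    iVal (fun vx vz => if g false then f1 vx vz else f0 vx vz)
      + iVal (fun vx vz => if g true then f1 vx vz else f0 vx vz) ≤ 1 := by
  set F0 : Bool → Bool → Bool := fun vx vz => if g false then f1 vx vz else f0 vx vz with hF0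
  set F1 : Bool → Bool → Bool := fun vx vz => if g true then f1 vx vz else f0 vx vz with hF1
  have h : ∀ vx vz, xor ((fun w => β (g false) w false) (F0 vx vz))
      ((fun w => β (g true) w true) (F1 vx vz)) = vx := by
    intro vx vz
    have h0 := hcon vx false vz
    have h1 := hcon vx true vz
    simp only [Bool.and_false, Bool.xor_false] at h0
    simp only [Bool.and_true] at h1
    simp only [hF0, hF1]
    rw [h0, h1]
    cases α vx vz <;> cases vx <;> rfl
  rcases key_comb F0 F1 (fun w => β (g false) w false) (fun w => β (g true) w true) h with
    h' | h' | ⟨h1', h2'⟩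
  · have := iVal_zero F0 h'
    have := iVal_le_one F1
    linarith
  · have := iVal_zero F1 h'
    have := iVal_le_one F0
    linarith
  · have := iVal_le_half F0 h1'
    have := iVal_le_half F1 h2'
    linarith

/-! Slice probability functions -/

section QDefs
variable {S : Type*}

def effD (F0 F1 : Bool × Bool × S → Bool) (G : Bool × S → Bool) (vs : S) (vy : Bool) :
    Bool → Bool → Bool := fun vx vz => if G (vy, vs) then F1 (vx, vz, vs) else F0 (vx, vz, vs)

noncomputable def QD (F0 F1 : Bool × Bool × S → Bool) (G : Bool × S → Bool) (vs : S)
    (w : Bool × Bool × Bool) : ℝ :=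
  ∑ vx : Bool, ∑ vy : Bool, ∑ vz : Bool,
    if effD F0 F1 G vs vy vx vz = w.1 ∧ G (vy, vs) = w.2.1 ∧ vy = w.2.2 then (1/8:ℝ) else 0

noncomputable def QZD (F0 F1 : Bool × Bool × S → Bool) (G : Bool × S → Bool) (vs : S)
    (w : Bool × Bool × Bool × Bool) : ℝ :=
  ∑ vx : Bool, ∑ vy : Bool, ∑ vz : Bool,
    if vz = w.1 ∧ effD F0 F1 G vs vy vx vz = w.2.1 ∧ G (vy, vs) = w.2.2.1 ∧ vy = w.2.2.2
    then (1/8:ℝ) else 0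

variable (F0 F1 : Bool × Bool × S → Bool) (G : Bool × S → Bool) (vs : S)

lemma QD_eq (vb vg vy : Bool) :
    QD F0 F1 G vs (vb, vg, vy)
      = if G (vy, vs) = vg then ((cnt2 (effD F0 F1 G vs vy) vb : ℝ))/8 else 0 := by
  by_cases hg : G (vy, vs) = vg <;>
    rcases vy <;>
      simp [QD, cnt1, cnt2, Fintype.sum_bool, hg] <;>
        split_ifs <;> norm_num

lemma QZD_eq (vz₀ vb vg vy : Bool) :
    QZD F0 F1 G vs (vz₀, vb, vg, vy)
      = if G (vy, vs) = vg then ((cnt1 (effD F0 F1 G vs vy) vz₀ vb : ℝ))/8 else 0 := by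
  by_cases hg : G (vy, vs) = vg <;>
    rcases vy <;> rcases vz₀ <;>
      simp [QZD, cnt1, Fintype.sum_bool, hg] <;>
        split_ifs <;> norm_num

lemma collapse_vg (c : Bool) (r : ℝ) :
    ∑ vg : Bool, -((if c = vg then r else 0) * Real.logb 2 (if c = vg then r else 0))
      = -(r * Real.logb 2 r) := by
  rcases c <;> simp [Fintype.sum_bool]

lemma collapse_vg' (c : Bool) (r : ℝ) :
    ∑ vg : Bool, (if c = vg then r else 0) = r := by
  rcases c <;> simp [Fintype.sum_bool]

lemma QD_sum : ∑ w : Bool × Bool × Bool, QD F0 F1 G vs w = 1 := by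
  simp only [Fintype.sum_prod_type]
  have e1 : ∀ vb : Bool, ∑ vg : Bool, ∑ vy : Bool, QD F0 F1 G vs (vb, vg, vy)
      = ∑ vy : Bool, ((cnt2 (effD F0 F1 G vs vy) vb : ℝ))/8 := by
    intro vb
    rw [Finset.sum_comm]
    refine Finset.sum_congr rfl fun vy _ => ?_
    simp only [QD_eq]
    exact collapse_vg' (G (vy, vs)) _
  rw [Finset.sum_congr rfl fun vb _ => e1 vb]
  simp only [Fintype.sum_bool]
  have c0 : ((cnt2 (effD F0 F1 G vs false) false : ℝ))
      + ((cnt2 (effD F0 F1 G vs false) true : ℝ)) = 4 := by exact_mod_cast cnt2_sum _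
  have c1 : ((cnt2 (effD F0 F1 G vs true) false : ℝ))
      + ((cnt2 (effD F0 F1 G vs true) true : ℝ)) = 4 := by exact_mod_cast cnt2_sum _
  linarith

lemma QZD_sum : ∑ w : Bool × Bool × Bool × Bool, QZD F0 F1 G vs w = 1 := by
  simp only [Fintype.sum_prod_type]
  have e1 : ∀ vz₀ vb : Bool, ∑ vg : Bool, ∑ vy : Bool, QZD F0 F1 G vs (vz₀, vb, vg, vy)
      = ∑ vy : Bool, ((cnt1 (effD F0 F1 G vs vy) vz₀ vb : ℝ))/8 := by
    intro vz₀ vb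
    rw [Finset.sum_comm]
    refine Finset.sum_congr rfl fun vy _ => ?_
    simp only [QZD_eq]
    exact collapse_vg' (G (vy, vs)) _
  rw [Finset.sum_congr rfl fun vz₀ _ => Finset.sum_congr rfl fun vb _ => e1 vz₀ vb]
  simp only [Fintype.sum_bool]
  have c00 : ((cnt1 (effD F0 F1 G vs false) false false : ℝ))
      + ((cnt1 (effD F0 F1 G vs false) false true : ℝ)) = 2 := by exact_mod_cast cnt1_sum _ _
  have c01 : ((cnt1 (effD F0 F1 G vs false) true false : ℝ))
      + ((cnt1 (effD F0 F1 G vs false) true true : ℝ)) = 2 := by exact_mod_cast cnt1_sum _ _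
  have c10 : ((cnt1 (effD F0 F1 G vs true) false false : ℝ))
      + ((cnt1 (effD F0 F1 G vs true) false true : ℝ)) = 2 := by exact_mod_cast cnt1_sum _ _
  have c11 : ((cnt1 (effD F0 F1 G vs true) true false : ℝ))
      + ((cnt1 (effD F0 F1 G vs true) true true : ℝ)) = 2 := by exact_mod_cast cnt1_sum _ _
  linarith

lemma EQ_eq : ∑ w : Bool × Bool × Bool, -(QD F0 F1 G vs w * Real.logb 2 (QD F0 F1 G vs w))
    = 1 + (1/2) * (SB (effD F0 F1 G vs false) + SB (effD F0 F1 G vs true)) := by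
  simp only [Fintype.sum_prod_type]
  have e1 : ∀ vb : Bool,
      ∑ vg : Bool, ∑ vy : Bool,
        -(QD F0 F1 G vs (vb, vg, vy) * Real.logb 2 (QD F0 F1 G vs (vb, vg, vy)))
      = ∑ vy : Bool, -(((cnt2 (effD F0 F1 G vs vy) vb : ℝ))/8
          * Real.logb 2 (((cnt2 (effD F0 F1 G vs vy) vb : ℝ))/8)) := by
    intro vb
    rw [Finset.sum_comm]
    refine Finset.sum_congr rfl fun vy _ => ?_
    simp only [QD_eq]
    exact collapse_vg (G (vy, vs)) _
  rw [Finset.sum_congr rfl fun vb _ => e1 vb]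
  simp only [Fintype.sum_bool, SB]
  rw [h8 _ (Nat.cast_nonneg _), h8 _ (Nat.cast_nonneg _), h8 _ (Nat.cast_nonneg _),
    h8 _ (Nat.cast_nonneg _)]
  have c0 : ((cnt2 (effD F0 F1 G vs false) false : ℝ))
      + ((cnt2 (effD F0 F1 G vs false) true : ℝ)) = 4 := by exact_mod_cast cnt2_sum _
  have c1 : ((cnt2 (effD F0 F1 G vs true) false : ℝ))
      + ((cnt2 (effD F0 F1 G vs true) true : ℝ)) = 4 := by exact_mod_cast cnt2_sum _
  linarith

lemma EQZ_eq : ∑ w : Bool × Bool × Bool × Bool,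
      -(QZD F0 F1 G vs w * Real.logb 2 (QZD F0 F1 G vs w))
    = 1 + (1/2) * (SJ (effD F0 F1 G vs false) + SJ (effD F0 F1 G vs true)) := by
  simp only [Fintype.sum_prod_type]
  have e1 : ∀ vz₀ vb : Bool,
      ∑ vg : Bool, ∑ vy : Bool,
        -(QZD F0 F1 G vs (vz₀, vb, vg, vy) * Real.logb 2 (QZD F0 F1 G vs (vz₀, vb, vg, vy)))
      = ∑ vy : Bool, -(((cnt1 (effD F0 F1 G vs vy) vz₀ vb : ℝ))/8
          * Real.logb 2 (((cnt1 (effD F0 F1 G vs vy) vz₀ vb : ℝ))/8)) := by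
    intro vz₀ vb
    rw [Finset.sum_comm]
    refine Finset.sum_congr rfl fun vy _ => ?_
    simp only [QZD_eq]
    exact collapse_vg (G (vy, vs)) _
  rw [Finset.sum_congr rfl fun vz₀ _ => Finset.sum_congr rfl fun vb _ => e1 vz₀ vb]
  simp only [Fintype.sum_bool, SJ]
  rw [h8 _ (Nat.cast_nonneg _), h8 _ (Nat.cast_nonneg _), h8 _ (Nat.cast_nonneg _),
    h8 _ (Nat.cast_nonneg _), h8 _ (Nat.cast_nonneg _), h8 _ (Nat.cast_nonneg _),
    h8 _ (Nat.cast_nonneg _), h8 _ (Nat.cast_nonneg _)]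
  have c00 : ((cnt1 (effD F0 F1 G vs false) false false : ℝ))
      + ((cnt1 (effD F0 F1 G vs false) false true : ℝ)) = 2 := by exact_mod_cast cnt1_sum _ _
  have c01 : ((cnt1 (effD F0 F1 G vs false) true false : ℝ))
      + ((cnt1 (effD F0 F1 G vs false) true true : ℝ)) = 2 := by exact_mod_cast cnt1_sum _ _
  have c10 : ((cnt1 (effD F0 F1 G vs true) false false : ℝ))
      + ((cnt1 (effD F0 F1 G vs true) false true : ℝ)) = 2 := by exact_mod_cast cnt1_sum _ _
  have c11 : ((cnt1 (effD F0 F1 G vs true) true false : ℝ))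
      + ((cnt1 (effD F0 F1 G vs true) true true : ℝ)) = 2 := by exact_mod_cast cnt1_sum _ _
  linarith

end QDefs

def e1E (S : Type*) : S × (Bool × Bool × Bool) ≃ Bool × Bool × Bool × S where
  toFun p := (p.2.1, p.2.2.1, p.2.2.2, p.1)
  invFun v := (v.2.2.2, (v.1, v.2.1, v.2.2.1))
  left_inv p := rfl
  right_inv v := rfl

def e2E (S : Type*) : S × (Bool × Bool × Bool × Bool) ≃ Bool × Bool × Bool × Bool × S where
  toFun p := (p.2.1, p.2.2.1, p.2.2.2.1, p.2.2.2.2, p.1)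
  invFun v := (v.2.2.2.2, (v.1, v.2.1, v.2.2.1, v.2.2.2.1))
  left_inv p := rfl
  right_inv v := rfl

lemma sumCollapse {S : Type*} [Fintype S] (μ : S → ℝ) (vs : S) (p : S → Prop) :
    ∑ vs' : S, (if p vs' ∧ vs' = vs then 1/8 * μ vs' else 0)
      = μ vs * (if p vs then (1/8:ℝ) else 0) := by
  rw [Finset.sum_eq_single vs]
  · by_cases h : p vs <;> simp [h] <;> ring
  · intro b _ hb; simp [hb]
  · intro h; exact absurd (Finset.mem_univ vs) h


/-- **Theorem 2 (mutual information bound).** In the racbox-simulation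
setting, if perfect PR-correlations `a ⊕ b = x ∧ y` hold at every point of
positive probability, then `I(z : (b̃, ỹ, y, s)) ≤ 1/2`. -/
theorem pr_simulation_mutInf_bound
    {Ω S : Type*} [Fintype Ω] [Fintype S]
    (P : Ω → ℝ) (hP : IsPMF P)
    (x y z : Ω → Bool) (s : Ω → S)
    (hindep : ∀ (vx vy vz : Bool) (vs : S),
      Pr P (fun ω => x ω = vx ∧ y ω = vy ∧ z ω = vz ∧ s ω = vs)
        = Pr P (fun ω => x ω = vx) * Pr P (fun ω => y ω = vy) *
            Pr P (fun ω => z ω = vz) * Pr P (fun ω => s ω = vs))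
    (hx : ∀ v, Pr P (fun ω => x ω = v) = 1/2)
    (hy : ∀ v, Pr P (fun ω => y ω = v) = 1/2)
    (hz : ∀ v, Pr P (fun ω => z ω = v) = 1/2)
    (A F0 F1 : Bool × Bool × S → Bool) (G : Bool × S → Bool)
    (B : Bool × Bool × S × Bool → Bool)
    (a yt bt b : Ω → Bool)
    (ha : ∀ ω, a ω = A (x ω, z ω, s ω))
    (hyt : ∀ ω, yt ω = G (y ω, s ω))
    (hbt : ∀ ω, bt ω = if yt ω then F1 (x ω, z ω, s ω) else F0 (x ω, z ω, s ω))
    (hb : ∀ ω, b ω = B (yt ω, bt ω, s ω, y ω))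
    (hPR : ∀ ω, 0 < P ω → xor (a ω) (b ω) = (x ω && y ω)) :
    mutInf P z (fun ω => (bt ω, yt ω, y ω, s ω)) ≤ 1/2 := by
  obtain ⟨hP0, hP1⟩ := hP
  set μ : S → ℝ := fun vs => Pr P (fun ω => s ω = vs) with hμdef
  have hμ0 : ∀ vs, 0 ≤ μ vs := fun vs => Pr_nonneg P hP0 _
  have hμ1 : ∑ vs, μ vs = 1 := by
    have e : ∀ ω : Ω, ∑ vs : S, (if s ω = vs then P ω else 0) = P ω := by
      intro ω
      rw [Finset.sum_ite_eq Finset.univ (s ω) (fun _ => P ω)]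
      simp
    calc ∑ vs, μ vs = ∑ vs, ∑ ω, (if s ω = vs then P ω else 0) := rfl
      _ = ∑ ω, ∑ vs : S, (if s ω = vs then P ω else 0) := Finset.sum_comm
      _ = ∑ ω, P ω := Finset.sum_congr rfl fun ω _ => e ω
      _ = 1 := hP1
  have htup : ∀ (v : Bool × Bool × Bool × S),
      Pr P (fun ω => (x ω, y ω, z ω, s ω) = v) = 1/8 * μ v.2.2.2 := by
    rintro ⟨vx, vy, vz, vs⟩
    have he : ∀ ω, ((x ω, y ω, z ω, s ω) = (vx, vy, vz, vs))
        ↔ (x ω = vx ∧ y ω = vy ∧ z ω = vz ∧ s ω = vs) := by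
      intro ω; simp [Prod.ext_iff]
    rw [Pr_congr he, hindep, hx, hy, hz]
    have : Pr P (fun ω => s ω = vs) = μ vs := rfl
    rw [this]; ring
  have master : ∀ (p : Bool × Bool × Bool × S → Prop),
      Pr P (fun ω => p (x ω, y ω, z ω, s ω))
        = ∑ v : Bool × Bool × Bool × S, if p v then 1/8 * μ v.2.2.2 else 0 := by
    intro p
    rw [Pr_map P (fun ω => (x ω, y ω, z ω, s ω)) p]
    exact Finset.sum_congr rfl fun v _ => by rw [htup v]
  -- probability of the joint value of (bt, yt, y, s)
  have hPrV : ∀ (w : Bool × Bool × Bool × S),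
      Pr P (fun ω => (bt ω, yt ω, y ω, s ω) = w)
        = μ w.2.2.2 * QD F0 F1 G w.2.2.2 (w.1, w.2.1, w.2.2.1) := by
    rintro ⟨vb, vg, vy, vs⟩
    have he : ∀ ω, ((bt ω, yt ω, y ω, s ω) = (vb, vg, vy, vs))
        ↔ (fun v : Bool × Bool × Bool × S =>
            (effD F0 F1 G v.2.2.2 v.2.1 v.1 v.2.2.1 = vb ∧ G (v.2.1, v.2.2.2) = vg
              ∧ v.2.1 = vy) ∧ v.2.2.2 = vs) (x ω, y ω, z ω, s ω) := by
      intro ω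
      simp only [hbt, hyt, effD, Prod.mk.injEq]
      tauto
    rw [Pr_congr he, master (fun v : Bool × Bool × Bool × S =>
      (effD F0 F1 G v.2.2.2 v.2.1 v.1 v.2.2.1 = vb ∧ G (v.2.1, v.2.2.2) = vg
        ∧ v.2.1 = vy) ∧ v.2.2.2 = vs)]
    simp only [Fintype.sum_prod_type]
    have einner : ∀ vx vy' vz : Bool,
        ∑ vs' : S, (if (effD F0 F1 G vs' vy' vx vz = vb ∧ G (vy', vs') = vg ∧ vy' = vy)
            ∧ vs' = vs then 1/8 * μ vs' else 0)
          = μ vs * (if effD F0 F1 G vs vy' vx vz = vb ∧ G (vy', vs) = vg ∧ vy' = vy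
              then (1/8:ℝ) else 0) := by
      intro vx vy' vz
      rw [Finset.sum_eq_single vs]
      · by_cases h : effD F0 F1 G vs vy' vx vz = vb ∧ G (vy', vs) = vg ∧ vy' = vy <;>
          simp [h] <;> ring
      · intro b' _ hb'; simp [hb']
      · intro h; exact absurd (Finset.mem_univ vs) h
    calc ∑ vx : Bool, ∑ vy' : Bool, ∑ vz : Bool,
          ∑ vs' : S, (if (effD F0 F1 G vs' vy' vx vz = vb ∧ G (vy', vs') = vg ∧ vy' = vy)
            ∧ vs' = vs then 1/8 * μ vs' else 0)
        = ∑ vx : Bool, ∑ vy' : Bool, ∑ vz : Bool,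
            μ vs * (if effD F0 F1 G vs vy' vx vz = vb ∧ G (vy', vs) = vg ∧ vy' = vy
              then (1/8:ℝ) else 0) := by
          refine Finset.sum_congr rfl fun vx _ => Finset.sum_congr rfl fun vy' _ =>
            Finset.sum_congr rfl fun vz _ => einner vx vy' vz
      _ = μ vs * QD F0 F1 G vs (vb, vg, vy) := by
          simp only [QD, Finset.mul_sum]
  -- probability of the joint value of (z, bt, yt, y, s)
  have hPrZV : ∀ (w : Bool × Bool × Bool × Bool × S),
      Pr P (fun ω => (z ω, bt ω, yt ω, y ω, s ω) = w)
        = μ w.2.2.2.2 * QZD F0 F1 G w.2.2.2.2 (w.1, w.2.1, w.2.2.1, w.2.2.2.1) := by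
    rintro ⟨vz₀, vb, vg, vy, vs⟩
    have he : ∀ ω, ((z ω, bt ω, yt ω, y ω, s ω) = (vz₀, vb, vg, vy, vs))
        ↔ (fun v : Bool × Bool × Bool × S =>
            (v.2.2.1 = vz₀ ∧ effD F0 F1 G v.2.2.2 v.2.1 v.1 v.2.2.1 = vb
              ∧ G (v.2.1, v.2.2.2) = vg ∧ v.2.1 = vy) ∧ v.2.2.2 = vs) (x ω, y ω, z ω, s ω) := by
      intro ω
      simp only [hbt, hyt, effD, Prod.mk.injEq]
      tauto
    rw [Pr_congr he, master (fun v : Bool × Bool × Bool × S =>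
      (v.2.2.1 = vz₀ ∧ effD F0 F1 G v.2.2.2 v.2.1 v.1 v.2.2.1 = vb
        ∧ G (v.2.1, v.2.2.2) = vg ∧ v.2.1 = vy) ∧ v.2.2.2 = vs)]
    simp only [Fintype.sum_prod_type]
    have einner : ∀ vx vy' vz : Bool,
        ∑ vs' : S, (if (vz = vz₀ ∧ effD F0 F1 G vs' vy' vx vz = vb ∧ G (vy', vs') = vg
            ∧ vy' = vy) ∧ vs' = vs then 1/8 * μ vs' else 0)
          = μ vs * (if vz = vz₀ ∧ effD F0 F1 G vs vy' vx vz = vb ∧ G (vy', vs) = vg ∧ vy' = vy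
              then (1/8:ℝ) else 0) := by
      intro vx vy' vz
      rw [Finset.sum_eq_single vs]
      · by_cases h : vz = vz₀ ∧ effD F0 F1 G vs vy' vx vz = vb ∧ G (vy', vs) = vg ∧ vy' = vy <;>
          simp [h] <;> ring
      · intro b' _ hb'; simp [hb']
      · intro h; exact absurd (Finset.mem_univ vs) h
    calc ∑ vx : Bool, ∑ vy' : Bool, ∑ vz : Bool,
          ∑ vs' : S, (if (vz = vz₀ ∧ effD F0 F1 G vs' vy' vx vz = vb ∧ G (vy', vs') = vg
            ∧ vy' = vy) ∧ vs' = vs then 1/8 * μ vs' else 0)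
        = ∑ vx : Bool, ∑ vy' : Bool, ∑ vz : Bool,
            μ vs * (if vz = vz₀ ∧ effD F0 F1 G vs vy' vx vz = vb ∧ G (vy', vs) = vg ∧ vy' = vy
              then (1/8:ℝ) else 0) := by
          refine Finset.sum_congr rfl fun vx _ => Finset.sum_congr rfl fun vy' _ =>
            Finset.sum_congr rfl fun vz _ => einner vx vy' vz
      _ = μ vs * QZD F0 F1 G vs (vz₀, vb, vg, vy) := by
          simp only [QZD, Finset.mul_sum]
  -- entropy of z
  have hentz : ent P z = 1 := by
    simp only [ent, Fintype.sum_bool, hz, lb_half']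
    norm_num
  -- entropy of V
  have hentV : ent P (fun ω => (bt ω, yt ω, y ω, s ω))
      = (-∑ vs, μ vs * Real.logb 2 (μ vs))
        + ∑ vs, μ vs * (1 + (1/2) * (SB (effD F0 F1 G vs false) + SB (effD F0 F1 G vs true))) := by
    unfold ent
    rw [← Fintype.sum_equiv (e1E S)
      (fun p => Pr P (fun ω => (bt ω, yt ω, y ω, s ω) = e1E S p)
        * Real.logb 2 (Pr P (fun ω => (bt ω, yt ω, y ω, s ω) = e1E S p)))
      (fun v => Pr P (fun ω => (bt ω, yt ω, y ω, s ω) = v)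
        * Real.logb 2 (Pr P (fun ω => (bt ω, yt ω, y ω, s ω) = v)))
      (fun p => rfl)]
    rw [Fintype.sum_prod_type]
    have e : ∀ (t : S) (w : Bool × Bool × Bool),
        Pr P (fun ω => (bt ω, yt ω, y ω, s ω) = e1E S (t, w)) = μ t * QD F0 F1 G t w := by
      intro t w
      rw [hPrV (e1E S (t, w))]; rfl
    rw [Finset.sum_congr rfl fun t _ => Finset.sum_congr rfl fun w _ => by rw [e t w]]
    rw [ent_decomp μ (fun t w => QD F0 F1 G t w) (fun t => QD_sum F0 F1 G t)]
    congr 1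
    refine Finset.sum_congr rfl fun t _ => ?_
    rw [EQ_eq F0 F1 G t]
  -- entropy of (z, V)
  have hentZV : ent P (fun ω => (z ω, bt ω, yt ω, y ω, s ω))
      = (-∑ vs, μ vs * Real.logb 2 (μ vs))
        + ∑ vs, μ vs * (1 + (1/2) * (SJ (effD F0 F1 G vs false) + SJ (effD F0 F1 G vs true))) := by
    unfold ent
    rw [← Fintype.sum_equiv (e2E S)
      (fun p => Pr P (fun ω => (z ω, bt ω, yt ω, y ω, s ω) = e2E S p)
        * Real.logb 2 (Pr P (fun ω => (z ω, bt ω, yt ω, y ω, s ω) = e2E S p)))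
      (fun v => Pr P (fun ω => (z ω, bt ω, yt ω, y ω, s ω) = v)
        * Real.logb 2 (Pr P (fun ω => (z ω, bt ω, yt ω, y ω, s ω) = v)))
      (fun p => rfl)]
    rw [Fintype.sum_prod_type]
    have e : ∀ (t : S) (w : Bool × Bool × Bool × Bool),
        Pr P (fun ω => (z ω, bt ω, yt ω, y ω, s ω) = e2E S (t, w)) = μ t * QZD F0 F1 G t w := by
      intro t w
      rw [hPrZV (e2E S (t, w))]; rfl
    rw [Finset.sum_congr rfl fun t _ => Finset.sum_congr rfl fun w _ => by rw [e t w]]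
    rw [ent_decomp μ (fun t w => QZD F0 F1 G t w) (fun t => QZD_sum F0 F1 G t)]
    congr 1
    refine Finset.sum_congr rfl fun t _ => ?_
    rw [EQZ_eq F0 F1 G t]
  -- per-slice bound
  have hslice : ∀ vs : S,
      μ vs * ((1/2) * (iVal (effD F0 F1 G vs false) + iVal (effD F0 F1 G vs true)))
        ≤ μ vs * (1/2) := by
    intro vs
    rcases (hμ0 vs).lt_or_eq with hpos | hzero
    · have hsup : ∀ vx vy vz : Bool,
          ∃ ω, 0 < P ω ∧ x ω = vx ∧ y ω = vy ∧ z ω = vz ∧ s ω = vs := by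
        intro vx vy vz
        apply Pr_pos_exists hP0
        have e : Pr P (fun ω => x ω = vx ∧ y ω = vy ∧ z ω = vz ∧ s ω = vs)
            = 1/8 * μ vs := by
          rw [← htup (vx, vy, vz, vs)]
          apply Pr_congr
          intro ω; simp [Prod.ext_iff]
        rw [e]; linarith
      have hcon : ∀ vx vy vz : Bool,
          B (G (vy, vs), (if G (vy, vs) then F1 (vx, vz, vs) else F0 (vx, vz, vs)), vs, vy)
            = xor (A (vx, vz, vs)) (vx && vy) := by
        intro vx vy vz
        obtain ⟨ω, hω, hxv, hyv, hzv, hsv⟩ := hsup vx vy vz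
        have h := hPR ω hω
        rw [ha, hb, hbt, hyt, hxv, hyv, hzv, hsv] at h
        have key : ∀ a' c d : Bool, xor a' c = d → c = xor a' d := by decide
        exact key _ _ _ h
      have hb' := slice_bound (fun vx vz => F0 (vx, vz, vs)) (fun vx vz => F1 (vx, vz, vs))
        (fun vy => G (vy, vs)) (fun vx vz => A (vx, vz, vs))
        (fun vg vb' vy => B (vg, vb', vs, vy)) (fun vx vy vz => hcon vx vy vz)
      have hIV : iVal (effD F0 F1 G vs false) + iVal (effD F0 F1 G vs true) ≤ 1 := hb'
      nlinarith [hpos, hIV]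
    · rw [← hzero]; simp
  -- final assembly
  unfold mutInf
  rw [hentz, hentV, hentZV]
  have expand : (1:ℝ)
      + ((-∑ vs, μ vs * Real.logb 2 (μ vs))
          + ∑ vs, μ vs * (1 + (1/2) * (SB (effD F0 F1 G vs false) + SB (effD F0 F1 G vs true))))
      - ((-∑ vs, μ vs * Real.logb 2 (μ vs))
          + ∑ vs, μ vs * (1 + (1/2) * (SJ (effD F0 F1 G vs false) + SJ (effD F0 F1 G vs true))))
      = ∑ vs, μ vs * ((1/2) * (iVal (effD F0 F1 G vs false) + iVal (effD F0 F1 G vs true))) := by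
    have e : ∀ vs : S,
        μ vs * (1 + (1/2) * (SB (effD F0 F1 G vs false) + SB (effD F0 F1 G vs true)))
          - μ vs * (1 + (1/2) * (SJ (effD F0 F1 G vs false) + SJ (effD F0 F1 G vs true)))
        = μ vs * ((1/2) * (iVal (effD F0 F1 G vs false) + iVal (effD F0 F1 G vs true))) - μ vs := by
      intro vs
      simp only [iVal]
      ring
    have h2 : (∑ vs, μ vs * (1 + (1/2) * (SB (effD F0 F1 G vs false) + SB (effD F0 F1 G vs true))))
        - (∑ vs, μ vs * (1 + (1/2) * (SJ (effD F0 F1 G vs false) + SJ (effD F0 F1 G vs true))))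
        = ∑ vs, (μ vs * ((1/2) * (iVal (effD F0 F1 G vs false) + iVal (effD F0 F1 G vs true))) - μ vs) := by
      rw [← Finset.sum_sub_distrib]
      exact Finset.sum_congr rfl fun vs _ => e vs
    have h3 : ∑ vs, (μ vs * ((1/2) * (iVal (effD F0 F1 G vs false) + iVal (effD F0 F1 G vs true))) - μ vs)
        = (∑ vs, μ vs * ((1/2) * (iVal (effD F0 F1 G vs false) + iVal (effD F0 F1 G vs true)))) - ∑ vs, μ vs :=
      Finset.sum_sub_distrib _ _
    rw [h3, hμ1] at h2
    linarith [h2]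
  rw [expand]
  calc ∑ vs, μ vs * ((1/2) * (iVal (effD F0 F1 G vs false) + iVal (effD F0 F1 G vs true)))
      ≤ ∑ vs, μ vs * (1/2) := Finset.sum_le_sum fun vs _ => hslice vs
    _ = 1/2 := by rw [← Finset.sum_mul, hμ1, one_mul]
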